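/- If $\alpha < \lambda - n$, then the power weight $w = |\cdot|^{\alpha}$ satisfies $\|w^{1/p} 1_{(0,1)^n}\|_{L^{p,\lambda}} = \infty$; and if $\alpha \ge \lambda + (p-1)n$, then $\|w^{-1/p} 1_{(0,1)^n}\|_{H^{p',\lambda}} = \infty$. -/

import Mathlib

open MeasureTheory ENNReal Set

noncomputable section

/-- Axis-parallel cube with lower corner `c` and side length `h`. -/
def Cube (n : ℕ) (c : Fin n → ℝ) (h : ℝ) : Set (Fin n → ℝ) :=
  {x | ∀ i, c i ≤ x i ∧ x i ≤ c i + h}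

/-- `λ`-dimensional Hausdorff content, via countable coverings by cubes. -/
def hausdorffContent (n : ℕ) (lam : ℝ) (E : Set (Fin n → ℝ)) : ℝ≥0∞ :=
  ⨅ (c : ℕ → Fin n → ℝ) (h : ℕ → ℝ) (_ : ∀ j, 0 < h j)
    (_ : E ⊆ ⋃ j, Cube n (c j) (h j)), ∑' j, ENNReal.ofReal (h j) ^ lam

/-- Choquet integral of an `ℝ≥0∞`-valued function against the Hausdorff content `H^λ`. -/
def choquetE (n : ℕ) (lam : ℝ) (φ : (Fin n → ℝ) → ℝ≥0∞) : ℝ≥0∞ :=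
  ∫⁻ t in Set.Ioi (0:ℝ), hausdorffContent n lam {y | ENNReal.ofReal t < φ y}

/-- Choquet integral of a real-valued function against the Hausdorff content `H^λ`. -/
def choquet (n : ℕ) (lam : ℝ) (φ : (Fin n → ℝ) → ℝ) : ℝ≥0∞ :=
  ∫⁻ t in Set.Ioi (0:ℝ), hausdorffContent n lam {y | t < φ y}

/-- The Morrey norm `‖f‖_{L^{p,λ}}`. -/
def morreyNorm (n : ℕ) (p lam : ℝ) (f : (Fin n → ℝ) → ℝ) : ℝ≥0∞ :=
  ⨆ (c : Fin n → ℝ) (h : ℝ) (_ : 0 < h),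
    ((∫⁻ x in Cube n c h, ENNReal.ofReal |f x| ^ p) / ENNReal.ofReal h ^ lam) ^ (1/p)

/-- The weighted Morrey norm of an `ℝ≥0∞`-valued function. -/
def morreyNormWE (n : ℕ) (p lam : ℝ) (w : (Fin n → ℝ) → ℝ) (f : (Fin n → ℝ) → ℝ≥0∞) : ℝ≥0∞ :=
  ⨆ (c : Fin n → ℝ) (h : ℝ) (_ : 0 < h),
    ((∫⁻ x in Cube n c h, f x ^ p * ENNReal.ofReal (w x)) / ENNReal.ofReal h ^ lam) ^ (1/p)

/-- The weighted Morrey norm `‖f‖_{L^{p,λ}(w)}`. -/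
def morreyNormW (n : ℕ) (p lam : ℝ) (w f : (Fin n → ℝ) → ℝ) : ℝ≥0∞ :=
  morreyNormWE n p lam w (fun x => ENNReal.ofReal |f x|)

/-- The Hardy–Littlewood maximal operator (over axis-parallel cubes). -/
def maximalFn (n : ℕ) (f : (Fin n → ℝ) → ℝ) (x : Fin n → ℝ) : ℝ≥0∞ :=
  ⨆ (c : Fin n → ℝ) (h : ℝ) (_ : 0 < h) (_ : x ∈ Cube n c h),
    (∫⁻ y in Cube n c h, ENNReal.ofReal |f y|) / ENNReal.ofReal (h ^ n)

/-- A weight: a nonnegative locally integrable function positive on a set of positive measure. -/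
def IsWeight (n : ℕ) (w : (Fin n → ℝ) → ℝ) : Prop :=
  Measurable w ∧ (∀ x, 0 ≤ w x) ∧ LocallyIntegrable w volume ∧ 0 < volume {x | 0 < w x}

/-- Muckenhoupt `A₁` weight with constant `C`. -/
def IsA1 (n : ℕ) (C : ℝ≥0∞) (w : (Fin n → ℝ) → ℝ) : Prop :=
  IsWeight n w ∧ ∀ᵐ x ∂(volume : Measure (Fin n → ℝ)), maximalFn n w x ≤ C * ENNReal.ofReal (w x)

/-- The basis `𝓑_λ`: `A₁` weights with Choquet integral against `H^λ` at most one. -/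
def MorreyBasis (n : ℕ) (lam : ℝ) : Set ((Fin n → ℝ) → ℝ) :=
  {b | (∃ C : ℝ≥0∞, C ≠ ⊤ ∧ IsA1 n C b) ∧ choquet n lam b ≤ 1}

/-- The norm of the space `H^{q,λ}`; note `b^{-q/q'} = b^{-(q-1)}`. -/
def hNorm (n : ℕ) (q lam : ℝ) (g : (Fin n → ℝ) → ℝ) : ℝ≥0∞ :=
  ⨅ (b : (Fin n → ℝ) → ℝ) (_ : b ∈ MorreyBasis n lam),
    (∫⁻ x, ENNReal.ofReal |g x| ^ q * ENNReal.ofReal (b x) ^ (-(q - 1))) ^ (1/q)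
/-- Euclidean norm on `Fin n → ℝ`. -/
def euclidNorm (n : ℕ) (x : Fin n → ℝ) : ℝ := Real.sqrt (∑ i, x i ^ 2)

/-- A `(p,λ)`-atom: supported in a cube `Q` with `‖a‖_{L^p} ≤ l(Q)^{-λ/p'}`. -/
def IsPLAtom (n : ℕ) (p lam : ℝ) (a : (Fin n → ℝ) → ℝ) : Prop :=
  Measurable a ∧ ∃ (c : Fin n → ℝ) (h : ℝ), 0 < h ∧ (∀ x ∉ Cube n c h, a x = 0) ∧
    (∫⁻ x, ENNReal.ofReal |a x| ^ p) ^ (1/p) ≤ ENNReal.ofReal h ^ (-(lam * (p - 1) / p))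

/-- The block space norm `‖f‖_{B^{p,λ}}`. -/
def blockNorm (n : ℕ) (p lam : ℝ) (f : (Fin n → ℝ) → ℝ) : ℝ≥0∞ :=
  ⨅ (cs : ℕ → ℝ) (a : ℕ → (Fin n → ℝ) → ℝ) (_ : ∀ k, IsPLAtom n p lam (a k))
    (_ : ∀ x, HasSum (fun k => cs k * a k x) (f x)),
    ∑' k, ENNReal.ofReal |cs k|

/-- The dyadic cube `2^{-k}(m + [0,1)^n)`. -/
def DCube (n : ℕ) (k : ℤ) (m : Fin n → ℤ) : Set (Fin n → ℝ) :=
  {x | ∀ i, (m i : ℝ) * (2:ℝ) ^ (-k) ≤ x i ∧ x i < ((m i : ℝ) + 1) * (2:ℝ) ^ (-k)}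

/-- The dyadic maximal operator with respect to a measure `μ`. -/
def dyadicMaximal (n : ℕ) (μ : Measure (Fin n → ℝ)) (f : (Fin n → ℝ) → ℝ)
    (x : Fin n → ℝ) : ℝ≥0∞ :=
  ⨆ (k : ℤ) (m : Fin n → ℤ) (_ : x ∈ DCube n k m),
    (∫⁻ y in DCube n k m, ENNReal.ofReal |f y| ∂μ) / μ (DCube n k m)

/-- The `L^p(μ)`-norm (with `p ∈ (0,∞]`) of an `ℝ≥0∞`-valued function. -/
def lpNormE {α : Type*} [MeasurableSpace α] (μ : Measure α) (p : ℝ≥0∞) (g : α → ℝ≥0∞) : ℝ≥0∞ :=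
  if p = ⊤ then essSup g μ else (∫⁻ x, g x ^ p.toReal ∂μ) ^ (1 / p.toReal)

/-- Content normalized on balls: the infimum of `ρ^λ` over balls `{|x| < ρ}` containing `E`. -/
def ballContent (n : ℕ) (lam : ℝ) (E : Set (Fin n → ℝ)) : ℝ≥0∞ :=
  ⨅ (ρ : ℝ) (_ : 0 ≤ ρ) (_ : E ⊆ {x | euclidNorm n x < ρ}), ENNReal.ofReal ρ ^ lam

/-- Choquet integral against the ball-normalized content. -/
def ballChoquet (n : ℕ) (lam : ℝ) (φ : (Fin n → ℝ) → ℝ) : ℝ≥0∞ :=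
  ∫⁻ t in Set.Ioi (0:ℝ), ballContent n lam {y | t < φ y}

/-- The `μ`-average of `g` over a dyadic cube (indexed by a pair `(k,m)`). -/
def dAvg (n : ℕ) (μ : Measure (Fin n → ℝ)) (g : (Fin n → ℝ) → ℝ)
    (Q : ℤ × (Fin n → ℤ)) : ℝ≥0∞ :=
  (∫⁻ y in DCube n Q.1 Q.2, ENNReal.ofReal (g y) ∂μ) / μ (DCube n Q.1 Q.2)

/-- `Q` is a stopping child of `F`: a maximal dyadic cube inside `F` whose `μ`-average of `g`
exceeds twice that of `F`. -/
def IsPChild (n : ℕ) (μ : Measure (Fin n → ℝ)) (g : (Fin n → ℝ) → ℝ)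
    (F Q : ℤ × (Fin n → ℤ)) : Prop :=
  DCube n Q.1 Q.2 ⊆ DCube n F.1 F.2 ∧ 2 * dAvg n μ g F < dAvg n μ g Q ∧
    ∀ Q' : ℤ × (Fin n → ℤ), DCube n Q.1 Q.2 ⊆ DCube n Q'.1 Q'.2 →
      DCube n Q'.1 Q'.2 ⊆ DCube n F.1 F.2 → 2 * dAvg n μ g F < dAvg n μ g Q' →
      DCube n Q'.1 Q'.2 = DCube n Q.1 Q.2

/-- The collection of principal cubes generated from `Q0`. -/
inductive Principal (n : ℕ) (μ : Measure (Fin n → ℝ)) (g : (Fin n → ℝ) → ℝ)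
    (Q0 : ℤ × (Fin n → ℤ)) : ℤ × (Fin n → ℤ) → Prop
  | base : Principal n μ g Q0 Q0
  | child (F Q : ℤ × (Fin n → ℤ)) : Principal n μ g Q0 F → IsPChild n μ g F Q →
      Principal n μ g Q0 Q

/-- The set `E_𝓕(F) = F \ ⋃_{F' ∈ ch_𝓕(F)} F'`. -/
def PrincipalRest (n : ℕ) (μ : Measure (Fin n → ℝ)) (g : (Fin n → ℝ) → ℝ)
    (F : ℤ × (Fin n → ℤ)) : Set (Fin n → ℝ) :=
  DCube n F.1 F.2 \ ⋃ (Q : ℤ × (Fin n → ℤ)) (_ : IsPChild n μ g F Q), DCube n Q.1 Q.2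

/-! ### Auxiliary lemmas -/

lemma cube_eq_pi (n : ℕ) (c : Fin n → ℝ) (h : ℝ) :
    Cube n c h = Set.pi univ (fun i => Icc (c i) (c i + h)) := by
  ext x; simp [Cube, Set.pi, mem_Icc]

lemma measurableSet_cube (n : ℕ) (c : Fin n → ℝ) (h : ℝ) : MeasurableSet (Cube n c h) := by
  rw [cube_eq_pi]; exact MeasurableSet.univ_pi (fun i => measurableSet_Icc)

lemma volume_cube (n : ℕ) (c : Fin n → ℝ) (h : ℝ) :
    volume (Cube n c h) = ENNReal.ofReal h ^ n := by
  rw [cube_eq_pi, volume_pi_pi]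
  simp [Real.volume_Icc]

lemma ennreal_rpow_anti {x y : ℝ≥0∞} {e : ℝ} (hxy : x ≤ y) (he : e ≤ 0) : y ^ e ≤ x ^ e := by
  have h := ENNReal.inv_le_inv.2 (ENNReal.rpow_le_rpow hxy (neg_nonneg.2 he))
  rwa [← ENNReal.rpow_neg, ← ENNReal.rpow_neg, neg_neg] at h

lemma content_lower (n : ℕ) (lam : ℝ) (hl0 : 0 ≤ lam) (hln : lam ≤ n)
    (E : Set (Fin n → ℝ)) (r : ℝ) (hr : 0 < r) :
    min (ENNReal.ofReal r ^ lam) (volume E * ENNReal.ofReal r ^ (lam - n)) ≤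
      hausdorffContent n lam E := by
  unfold hausdorffContent
  simp only [le_iInf_iff]
  intro c h hpos hcov
  by_cases hc : ∃ j, r ≤ h j
  · obtain ⟨j, hj⟩ := hc
    refine le_trans (min_le_left _ _) (le_trans ?_ (ENNReal.le_tsum j))
    exact ENNReal.rpow_le_rpow (ENNReal.ofReal_le_ofReal hj) hl0
  · push_neg at hc
    refine le_trans (min_le_right _ _) ?_
    have hvol : volume E ≤ ∑' j, ENNReal.ofReal (h j) ^ (n : ℕ) := by
      calc volume E ≤ volume (⋃ j, Cube n (c j) (h j)) := measure_mono hcov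
        _ ≤ ∑' j, volume (Cube n (c j) (h j)) := measure_iUnion_le _
        _ = ∑' j, ENNReal.ofReal (h j) ^ (n : ℕ) := by simp [volume_cube]
    calc volume E * ENNReal.ofReal r ^ (lam - n)
        ≤ (∑' j, ENNReal.ofReal (h j) ^ (n : ℕ)) * ENNReal.ofReal r ^ (lam - n) :=
          mul_le_mul_left hvol _
      _ = ∑' j, ENNReal.ofReal (h j) ^ (n : ℕ) * ENNReal.ofReal r ^ (lam - n) :=
          ENNReal.tsum_mul_right.symm
      _ ≤ ∑' j, ENNReal.ofReal (h j) ^ lam := by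
          refine ENNReal.tsum_le_tsum (fun j => ?_)
          have h0 : ENNReal.ofReal (h j) ≠ 0 := by
            simp only [ne_eq, ENNReal.ofReal_eq_zero, not_le]; linarith [hpos j]
          have hrle : ENNReal.ofReal r ^ (lam - n) ≤ ENNReal.ofReal (h j) ^ (lam - n) :=
            ennreal_rpow_anti (ENNReal.ofReal_le_ofReal (hc j).le) (by linarith)
          calc ENNReal.ofReal (h j) ^ (n : ℕ) * ENNReal.ofReal r ^ (lam - n)
              ≤ ENNReal.ofReal (h j) ^ (n : ℕ) * ENNReal.ofReal (h j) ^ (lam - n) :=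
                mul_le_mul_right hrle _
            _ = ENNReal.ofReal (h j) ^ lam := by
                rw [← ENNReal.rpow_natCast, ← ENNReal.rpow_add _ _ h0 ENNReal.ofReal_ne_top]
                ring_nf

lemma euclidNorm_nonneg (n : ℕ) (x : Fin n → ℝ) : 0 ≤ euclidNorm n x := Real.sqrt_nonneg _

lemma euclidNorm_pos {n : ℕ} {x : Fin n → ℝ} (hx : x ≠ 0) : 0 < euclidNorm n x := by
  have hex : ∃ i, x i ≠ 0 := by
    by_contra hc
    push_neg at hc
    exact hx (funext hc)
  obtain ⟨i, hi⟩ := hex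
  have : 0 < ∑ j, x j ^ 2 :=
    Finset.sum_pos' (fun j _ => sq_nonneg _) ⟨i, Finset.mem_univ i, pow_pos (abs_pos.2 hi) 2 |>.trans_le (by rw [sq_abs])⟩
  exact Real.sqrt_pos.2 this

lemma euclidNorm_le_of_mem_cube {n : ℕ} {x : Fin n → ℝ} {r : ℝ} (hr : 0 ≤ r)
    (hx : x ∈ Cube n 0 r) : euclidNorm n x ≤ Real.sqrt n * r := by
  have hb : ∀ i, 0 ≤ x i ∧ x i ≤ r := by
    intro i
    have := hx i
    simpa using this
  have hsum : ∑ i, x i ^ 2 ≤ (n : ℝ) * r ^ 2 := by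
    calc ∑ i, x i ^ 2 ≤ ∑ _i : Fin n, r ^ 2 :=
          Finset.sum_le_sum (fun i _ => pow_le_pow_left₀ (hb i).1 (hb i).2 2)
      _ = (n : ℝ) * r ^ 2 := by simp [Finset.sum_const, mul_comm]
  calc euclidNorm n x ≤ Real.sqrt ((n : ℝ) * r ^ 2) := Real.sqrt_le_sqrt hsum
    _ = Real.sqrt n * r := by
        rw [Real.sqrt_mul (Nat.cast_nonneg n), Real.sqrt_sq hr]

lemma volume_singleton_zero {n : ℕ} (hn : n ≠ 0) :
    volume ({0} : Set (Fin n → ℝ)) = 0 := by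
  have hsub : ({0} : Set (Fin n → ℝ)) ⊆ Cube n 0 0 := by
    intro x hx
    simp only [mem_singleton_iff] at hx
    subst hx
    intro i; simp
  refine measure_mono_null hsub ?_
  rw [volume_cube]
  simp [hn]

lemma cube_subset_cube {n : ℕ} {r s : ℝ} (hrs : r ≤ s) :
    Cube n 0 r ⊆ Cube n 0 s := by
  intro x hx i
  have := hx i
  simp only [Pi.zero_apply, zero_add] at this ⊢
  exact ⟨this.1, this.2.trans hrs⟩

lemma weight_cube_bound (n : ℕ) (lam : ℝ) (hl0 : 0 < lam) (hln : lam ≤ n) (hnne : n ≠ 0)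
    (b : (Fin n → ℝ) → ℝ) (C : ℝ≥0∞) (hCtop : C ≠ ⊤) (hA : IsA1 n C b)
    (hch : choquet n lam b ≤ 1) (r : ℝ) (hr : 0 < r) :
    ∫⁻ x in Cube n 0 r, ENNReal.ofReal (b x) ≤
      ENNReal.ofReal (max C.toReal 1) * ENNReal.ofReal r ^ ((n:ℝ) - lam) := by
  obtain ⟨⟨hbm, hb0, hbloc, _⟩, hA1⟩ := hA
  set c' : ℝ≥0∞ := ENNReal.ofReal (max C.toReal 1) with hc'def
  have hc'0 : c' ≠ 0 := by
    simp only [hc'def, ne_eq, ENNReal.ofReal_eq_zero, not_le]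
    exact lt_of_lt_of_le one_pos (le_max_right _ _)
  have hc't : c' ≠ ⊤ := ENNReal.ofReal_ne_top
  have hCc : C ≤ c' := by
    rw [← ENNReal.ofReal_toReal hCtop]
    exact ENNReal.ofReal_le_ofReal (le_max_left _ _)
  set Q := Cube n 0 r with hQdef
  set A := ∫⁻ x in Q, ENNReal.ofReal (b x) with hAdef
  have ha0 : ENNReal.ofReal r ≠ 0 := by
    simp only [ne_eq, ENNReal.ofReal_eq_zero, not_le]; exact hr
  have hat : ENNReal.ofReal r ≠ ⊤ := ENNReal.ofReal_ne_top
  have hAfin : A ≠ ⊤ := by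
    have hcomp : IsCompact Q := by
      rw [hQdef, cube_eq_pi]; exact isCompact_univ_pi (fun i => isCompact_Icc)
    exact (hbloc.integrableOn_isCompact hcomp).lintegral_lt_top.ne
  have hvolQ : volume Q = ENNReal.ofReal r ^ ((n:ℝ)) := by
    rw [hQdef, volume_cube, ENNReal.rpow_natCast]
  have hvQ0 : volume Q ≠ 0 := by
    rw [hvolQ]; exact (ENNReal.rpow_pos (lt_of_le_of_ne zero_le (Ne.symm ha0)) hat).ne'
  have hvQt : volume Q ≠ ⊤ := by
    rw [hvolQ]; exact ENNReal.rpow_ne_top_of_nonneg (Nat.cast_nonneg n) hat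
  set D := c' * volume Q with hDdef
  have hD0 : D ≠ 0 := mul_ne_zero hc'0 hvQ0
  have hDt : D ≠ ⊤ := ENNReal.mul_ne_top hc't hvQt
  set u := A / D with hudef
  have hut : u ≠ ⊤ := (ENNReal.div_lt_top hAfin hD0).ne
  have hae : ∀ᵐ x ∂(volume : Measure (Fin n → ℝ)), x ∈ Q → u ≤ ENNReal.ofReal (b x) := by
    filter_upwards [hA1] with x hx hxQ
    have hmax : A / ENNReal.ofReal (r ^ n) ≤ maximalFn n b x := by
      unfold maximalFn
      refine le_iSup_of_le (0 : Fin n → ℝ)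
        (le_iSup_of_le r (le_iSup_of_le hr (le_iSup_of_le hxQ ?_)))
      refine le_of_eq ?_
      congr 1
      exact lintegral_congr fun y => by rw [abs_of_nonneg (hb0 y)]
    have h2 : A / volume Q ≤ c' * ENNReal.ofReal (b x) := by
      have : volume Q = ENNReal.ofReal (r ^ n) := by
        rw [hvolQ, ENNReal.rpow_natCast, ENNReal.ofReal_pow hr.le]
      rw [this]
      exact hmax.trans (hx.trans (mul_le_mul_left hCc _))
    rw [hudef, hDdef, ENNReal.div_le_iff_le_mul (Or.inl hD0) (Or.inl hDt)]
    have h3 : A ≤ c' * ENNReal.ofReal (b x) * volume Q :=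
      (ENNReal.div_le_iff_le_mul (Or.inl hvQ0) (Or.inl hvQt)).1 h2
    calc A ≤ c' * ENNReal.ofReal (b x) * volume Q := h3
      _ = ENNReal.ofReal (b x) * (c' * volume Q) := by ring
  have hcont : ∀ t ∈ Ioo (0:ℝ) u.toReal,
      ENNReal.ofReal r ^ lam ≤ hausdorffContent n lam {y | t < b y} := by
    intro t ht
    have hN : volume {x | ¬ (x ∈ Q → u ≤ ENNReal.ofReal (b x))} = 0 := hae
    set N := {x | ¬ (x ∈ Q → u ≤ ENNReal.ofReal (b x))} with hNdef
    have hsub : Q \ N ⊆ {y | t < b y} := by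
      rintro x ⟨hxQ, hxN⟩
      have hux : u ≤ ENNReal.ofReal (b x) := not_not.1 hxN hxQ
      have h4 : ENNReal.ofReal t < u := by
        rw [← ENNReal.ofReal_toReal hut]
        exact (ENNReal.ofReal_lt_ofReal_iff_of_nonneg ht.1.le).2 ht.2
      exact mem_setOf.2 ((ENNReal.ofReal_lt_ofReal_iff_of_nonneg ht.1.le).1 (h4.trans_le hux))
    have hcl := content_lower n lam hl0.le hln {y | t < b y} r hr
    refine le_trans (le_min le_rfl ?_) hcl
    have hvge : ENNReal.ofReal r ^ ((n:ℝ)) ≤ volume {y | t < b y} := by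
      rw [← hvolQ, ← measure_diff_null (s := Q) hN]
      exact measure_mono hsub
    calc ENNReal.ofReal r ^ lam
        = ENNReal.ofReal r ^ ((n:ℝ)) * ENNReal.ofReal r ^ (lam - n) := by
          rw [← ENNReal.rpow_add _ _ ha0 hat]; ring_nf
      _ ≤ volume {y | t < b y} * ENNReal.ofReal r ^ (lam - n) :=
          mul_le_mul_left hvge _
  have hcq : ENNReal.ofReal r ^ lam * u ≤ 1 := by
    have step : ENNReal.ofReal r ^ lam * ENNReal.ofReal u.toReal ≤ choquet n lam b := by
      calc ENNReal.ofReal r ^ lam * ENNReal.ofReal u.toReal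
          = ENNReal.ofReal r ^ lam * volume (Ioo (0:ℝ) u.toReal) := by
            rw [Real.volume_Ioo, sub_zero]
        _ = ∫⁻ _t in Ioo (0:ℝ) u.toReal, ENNReal.ofReal r ^ lam :=
            (setLIntegral_const _ _).symm
        _ ≤ ∫⁻ t in Ioo (0:ℝ) u.toReal, hausdorffContent n lam {y | t < b y} :=
            setLIntegral_mono' measurableSet_Ioo hcont
        _ ≤ choquet n lam b := lintegral_mono_set Ioo_subset_Ioi_self
    rw [ENNReal.ofReal_toReal hut] at step
    exact step.trans hch
  have hu : u ≤ (ENNReal.ofReal r ^ lam)⁻¹ :=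
    ENNReal.le_inv_iff_mul_le.2 (by rwa [mul_comm] at hcq)
  calc A = u * D := (ENNReal.div_mul_cancel hD0 hDt).symm
    _ ≤ (ENNReal.ofReal r ^ lam)⁻¹ * D := mul_le_mul_left hu D
    _ = c' * ENNReal.ofReal r ^ ((n:ℝ) - lam) := by
        rw [hDdef, hvolQ, ← ENNReal.rpow_neg, ← mul_assoc, mul_comm _ c', mul_assoc,
          ← ENNReal.rpow_add _ _ ha0 hat]
        ring_nf

lemma holder_lower {n : ℕ} {b : (Fin n → ℝ) → ℝ} (hbm : Measurable b) (hb0 : ∀ x, 0 ≤ b x)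
    {E : Set (Fin n → ℝ)} (hE : MeasurableSet E) {p q : ℝ} (hpq : p.HolderConjugate q)
    {d : ℝ≥0∞} (hd : (∫⁻ x in E, ENNReal.ofReal (b x)) ^ (1/p) ≤ d)
    (hd0 : d ≠ 0) (hdt : d ≠ ⊤) :
    (volume E / d) ^ q ≤ ∫⁻ x in E, ENNReal.ofReal (b x) ^ (-(q - 1)) := by
  have hp0 : (0:ℝ) < p := hpq.pos
  have hq1 : (1:ℝ) < q := hpq.symm.lt
  have hq0 : (0:ℝ) < q := by linarith
  have hqp : q / p = q - 1 := by
    have hp1 : p - 1 ≠ 0 := sub_ne_zero.2 (ne_of_gt hpq.lt)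
    rw [hpq.conjugate_eq]
    field_simp
    ring
  set W : (Fin n → ℝ) → ℝ≥0∞ := fun x => ENNReal.ofReal (b x) with hWdef
  have hWm : Measurable W := hbm.ennreal_ofReal
  by_cases hz : volume (E ∩ {x | b x = 0}) = 0
  · -- Hölder case
    have hf : AEMeasurable (fun x => W x ^ (1/p)) (volume.restrict E) :=
      (hWm.pow_const _).aemeasurable
    have hg : AEMeasurable (fun x => W x ^ (-(1/p))) (volume.restrict E) :=
      (hWm.pow_const _).aemeasurable
    have key := ENNReal.lintegral_mul_le_Lp_mul_Lq (volume.restrict E) hpq hf hg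
    -- identify the three integrals
    have hae0 : ∀ᵐ x ∂(volume.restrict E), b x ≠ 0 := by
      rw [ae_iff]
      simp only [ne_eq, not_not]
      have hms : MeasurableSet {x : Fin n → ℝ | b x = 0} := hbm (measurableSet_singleton (0:ℝ))
      rw [Measure.restrict_apply hms]
      simpa [Set.inter_comm] using hz
    have h1 : (∫⁻ x in E, (fun x => W x ^ (1/p)) x * (fun x => W x ^ (-(1/p))) x) = volume E := by
      have : ∀ᵐ x ∂(volume.restrict E),
          W x ^ (1/p) * W x ^ (-(1/p)) = 1 := by
        filter_upwards [hae0] with x hx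
        have hW0 : W x ≠ 0 := by
          simp only [hWdef, ne_eq, ENNReal.ofReal_eq_zero, not_le]
          exact lt_of_le_of_ne (hb0 x) (Ne.symm hx)
        rw [← ENNReal.rpow_add _ _ hW0 ENNReal.ofReal_ne_top]
        norm_num
      calc (∫⁻ x in E, W x ^ (1/p) * W x ^ (-(1/p)))
          = ∫⁻ _x in E, 1 := lintegral_congr_ae this
        _ = volume E := by simp
    have h2 : (∫⁻ x in E, ((fun x => W x ^ (1/p)) x) ^ p) = ∫⁻ x in E, W x := by
      refine lintegral_congr fun x => ?_
      rw [← ENNReal.rpow_mul, one_div_mul_cancel hp0.ne', ENNReal.rpow_one]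
    have h3 : (∫⁻ x in E, ((fun x => W x ^ (-(1/p))) x) ^ q) =
        ∫⁻ x in E, W x ^ (-(q-1)) := by
      refine lintegral_congr fun x => ?_
      rw [← ENNReal.rpow_mul]
      congr 1
      rw [← hqp]
      field_simp
    simp only [Pi.mul_apply] at key
    rw [h1, h2, h3] at key
    have h4 : volume E ≤ d * (∫⁻ x in E, W x ^ (-(q-1))) ^ (1/q) :=
      key.trans (mul_le_mul_left hd _)
    have h5 : volume E / d ≤ (∫⁻ x in E, W x ^ (-(q-1))) ^ (1/q) := by
      rw [ENNReal.div_le_iff_le_mul (Or.inl hd0) (Or.inl hdt)]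
      rwa [mul_comm] at h4
    calc (volume E / d) ^ q ≤ ((∫⁻ x in E, W x ^ (-(q-1))) ^ (1/q)) ^ q :=
        ENNReal.rpow_le_rpow h5 hq0.le
      _ = ∫⁻ x in E, W x ^ (-(q-1)) := by
          rw [← ENNReal.rpow_mul, one_div_mul_cancel hq0.ne', ENNReal.rpow_one]
  · -- degenerate case
    have htop : (∫⁻ x in E, W x ^ (-(q-1))) = ⊤ := by
      have hs : MeasurableSet (E ∩ {x | b x = 0}) := by
        exact hE.inter (hbm (measurableSet_singleton (0:ℝ)))
      have hub : ∀ x ∈ E ∩ {x | b x = 0}, (⊤:ℝ≥0∞) ≤ W x ^ (-(q-1)) := by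
        rintro x ⟨_, hx0⟩
        have : W x = 0 := by simp [hWdef, mem_setOf_eq.mp hx0]
        rw [this, ENNReal.zero_rpow_of_neg (by linarith)]
      have := setLIntegral_mono' (μ := volume) hs hub
      rw [setLIntegral_const] at this
      rw [ENNReal.top_mul hz] at this
      exact top_le_iff.1 ((this.trans (lintegral_mono_set inter_subset_left)))
    rw [htop]
    exact le_top

/-- if `α < λ - n` then `‖w^{1/p} 1_{(0,1)^n}‖_{L^{p,λ}} = ∞`, and if
`α ≥ λ + (p-1)n` then `‖w^{-1/p} 1_{(0,1)^n}‖_{H^{p',λ}} = ∞`, for `w = |·|^α`. -/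
theorem power_weight_endpoints (n : ℕ) (p lam α : ℝ) (hp : 1 < p)
    (h1 : 0 < lam) (h2 : lam < n) :
    (α < lam - n →
      morreyNormW n p lam (fun x => euclidNorm n x ^ α)
        ((Cube n 0 1).indicator fun _ => 1) = ⊤) ∧
    (lam + (p - 1) * n ≤ α →
      hNorm n (p/(p-1)) lam
        ((Cube n 0 1).indicator fun x => (euclidNorm n x ^ α) ^ (-(1:ℝ)/p)) = ⊤) := by
  have hn0 : (0:ℝ) < n := h1.trans h2
  have hnne : n ≠ 0 := by exact_mod_cast Nat.pos_of_ne_zero (fun hh => by simp [hh] at hn0) |>.ne'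
  constructor
  · intro hα
    have hα0 : α ≤ 0 := by linarith
    have hp0 : (0:ℝ) < p := by linarith
    set κ : ℝ≥0∞ := ENNReal.ofReal (Real.sqrt n ^ α) with hκdef
    have hsqn : (0:ℝ) < Real.sqrt n := Real.sqrt_pos.2 hn0
    have hκ0 : κ ≠ 0 := by
      simp only [hκdef, ne_eq, ENNReal.ofReal_eq_zero, not_le]
      exact Real.rpow_pos_of_pos hsqn α
    set e : ℝ := α + n - lam with hedef
    have hee : e < 0 := by simp only [hedef]; linarith
    set q : ℝ := (1/2 : ℝ) ^ e with hqdef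
    have hq1 : 1 < q := Real.one_lt_rpow_of_pos_of_lt_one_of_neg (by norm_num) (by norm_num) hee
    set z : ℝ≥0∞ := ENNReal.ofReal q ^ (1/p) with hzdef
    have hz1 : 1 < z := ENNReal.one_lt_rpow (by exact_mod_cast ENNReal.one_lt_ofReal.2 hq1)
      (by positivity)
    -- main lower bound for each k
    have key : ∀ k : ℕ, κ ^ (1/p) * z ^ k ≤
        morreyNormW n p lam (fun x => euclidNorm n x ^ α)
          ((Cube n 0 1).indicator fun _ => 1) := by
      intro k
      set r : ℝ := (1/2 : ℝ) ^ k with hrdef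
      have hr : 0 < r := by positivity
      have hr1 : r ≤ 1 := pow_le_one₀ (by norm_num) (by norm_num)
      have ha0 : ENNReal.ofReal r ≠ 0 := by
        simp only [ne_eq, ENNReal.ofReal_eq_zero, not_le]; exact hr
      -- pointwise lower bound on the integrand
      have hbound : ∀ x ∈ Cube n 0 r \ {0},
          ENNReal.ofReal (Real.sqrt n * r) ^ α ≤
          ENNReal.ofReal |((Cube n 0 1).indicator fun _ => (1:ℝ)) x| ^ p *
            ENNReal.ofReal (euclidNorm n x ^ α) := by
        intro x hx
        obtain ⟨hxc, hxne⟩ := hx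
        have hmem : x ∈ Cube n 0 1 := cube_subset_cube hr1 hxc
        rw [Set.indicator_of_mem hmem]
        have hno : 0 < euclidNorm n x := euclidNorm_pos (by simpa using hxne)
        have hle : euclidNorm n x ≤ Real.sqrt n * r := euclidNorm_le_of_mem_cube hr.le hxc
        have : (Real.sqrt n * r) ^ α ≤ euclidNorm n x ^ α :=
          Real.rpow_le_rpow_of_nonpos hno hle hα0
        rw [ENNReal.ofReal_rpow_of_pos (by positivity)]
        simpa using ENNReal.ofReal_le_ofReal this
      -- integral lower bound
      have hIb : ENNReal.ofReal (Real.sqrt n * r) ^ α * ENNReal.ofReal r ^ (n:ℝ) ≤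
          ∫⁻ x in Cube n 0 r,
            ENNReal.ofReal |((Cube n 0 1).indicator fun _ => (1:ℝ)) x| ^ p *
              ENNReal.ofReal (euclidNorm n x ^ α) := by
        have hvd : volume (Cube n 0 r \ {0}) = ENNReal.ofReal r ^ (n:ℝ) := by
          rw [measure_diff_null (volume_singleton_zero hnne), volume_cube,
            ENNReal.rpow_natCast]
        calc ENNReal.ofReal (Real.sqrt n * r) ^ α * ENNReal.ofReal r ^ (n:ℝ)
            = ∫⁻ _x in Cube n 0 r \ {0}, ENNReal.ofReal (Real.sqrt n * r) ^ α := by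
              rw [setLIntegral_const, hvd]
          _ ≤ ∫⁻ x in Cube n 0 r \ {0},
                ENNReal.ofReal |((Cube n 0 1).indicator fun _ => (1:ℝ)) x| ^ p *
                  ENNReal.ofReal (euclidNorm n x ^ α) :=
              setLIntegral_mono' ((measurableSet_cube n 0 r).diff (measurableSet_singleton 0))
                hbound
          _ ≤ _ := lintegral_mono_set diff_subset
      -- pass to the Morrey norm
      have hstep : ((ENNReal.ofReal (Real.sqrt n * r) ^ α * ENNReal.ofReal r ^ (n:ℝ)) /
            ENNReal.ofReal r ^ lam) ^ (1/p) ≤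
          morreyNormW n p lam (fun x => euclidNorm n x ^ α)
            ((Cube n 0 1).indicator fun _ => 1) := by
        unfold morreyNormW morreyNormWE
        refine le_iSup_of_le (0 : Fin n → ℝ) (le_iSup_of_le r (le_iSup_of_le hr ?_))
        exact ENNReal.rpow_le_rpow (ENNReal.div_le_div_right hIb _) (by positivity)
      refine le_trans (le_of_eq ?_) hstep
      -- algebraic simplification
      have h1' : ENNReal.ofReal (Real.sqrt n * r) ^ α = κ * ENNReal.ofReal r ^ α := by
        rw [ENNReal.ofReal_rpow_of_pos (by positivity), Real.mul_rpow hsqn.le hr.le,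
          ENNReal.ofReal_mul (by positivity), hκdef, ENNReal.ofReal_rpow_of_pos hr]
      rw [h1', mul_assoc, ← ENNReal.rpow_add _ _ ha0 ENNReal.ofReal_ne_top,
        mul_div_assoc, ← ENNReal.rpow_sub _ _ ha0 ENNReal.ofReal_ne_top]
      have h2' : α + (n:ℝ) - lam = e := by simp [hedef]
      rw [h2', ENNReal.mul_rpow_of_nonneg _ _ (by positivity)]
      congr 1
      rw [hzdef, hrdef, ← ENNReal.rpow_natCast (ENNReal.ofReal q ^ (1/p)) k,
        ← ENNReal.rpow_mul, ENNReal.ofReal_pow (by norm_num), ← ENNReal.rpow_natCast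
          (ENNReal.ofReal (1/2)) k, ← ENNReal.rpow_mul,
        ENNReal.ofReal_rpow_of_pos (by norm_num : (0:ℝ) < 1/2)]
      rw [hqdef, ← ENNReal.ofReal_rpow_of_pos (by norm_num : (0:ℝ) < 1/2),
        ← ENNReal.ofReal_rpow_of_pos (by norm_num : (0:ℝ) < 1/2),
        ← ENNReal.rpow_mul, ← ENNReal.rpow_mul]
      congr 1
      ring
    -- conclude
    have hκ' : κ ^ (1/p) ≠ 0 := by
      refine (ENNReal.rpow_pos (lt_of_le_of_ne zero_le (Ne.symm hκ0)) ?_).ne'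
      exact ENNReal.ofReal_ne_top
    have htend : Filter.Tendsto (fun k : ℕ => κ ^ (1/p) * z ^ k) Filter.atTop (nhds ⊤) := by
      have h3' := ENNReal.tendsto_pow_atTop_nhds_top_iff.2 hz1
      have := ENNReal.Tendsto.const_mul (a := κ ^ (1/p)) h3'
        (Or.inl (by simp : (⊤:ℝ≥0∞) ≠ 0))
      rwa [ENNReal.mul_top hκ'] at this
    exact top_le_iff.1 (le_of_tendsto' htend key)
  · intro hα
    have hp0 : (0:ℝ) < p := by linarith
    have hp1 : (0:ℝ) < p - 1 := by linarith
    have hpq : p.HolderConjugate (p/(p-1)) := Real.HolderConjugate.conjExponent hp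
    set q : ℝ := p / (p - 1) with hqdef
    have hq1 : (1:ℝ) < q := hpq.symm.lt
    have hq0 : (0:ℝ) < q := by linarith
    have hnn : (0:ℝ) ≤ (p-1) * n := mul_nonneg hp1.le (Nat.cast_nonneg n)
    have hα0 : 0 < α := by linarith
    set β : ℝ := α / (p - 1) with hβdef
    have hβ : 0 < β := div_pos hα0 hp1
    set g : (Fin n → ℝ) → ℝ :=
      (Cube n 0 1).indicator fun x => (euclidNorm n x ^ α) ^ (-(1:ℝ)/p) with hgdef
    unfold hNorm
    rw [iInf_eq_top]
    intro b
    rw [iInf_eq_top]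
    intro hb
    obtain ⟨⟨C, hCtop, hA⟩, hch⟩ := hb
    obtain ⟨⟨hbm, hb0, _hbloc, _⟩, _⟩ := id hA
    set c' : ℝ≥0∞ := ENNReal.ofReal (max C.toReal 1) with hc'def
    have hc'0 : c' ≠ 0 := by
      simp only [hc'def, ne_eq, ENNReal.ofReal_eq_zero, not_le]
      exact lt_of_lt_of_le one_pos (le_max_right _ _)
    have hc't : c' ≠ ⊤ := ENNReal.ofReal_ne_top
    set W : (Fin n → ℝ) → ℝ≥0∞ := fun x => ENNReal.ofReal (b x) with hWdef
    set F : (Fin n → ℝ) → ℝ≥0∞ :=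
      fun x => ENNReal.ofReal |g x| ^ q * W x ^ (-(q - 1)) with hFdef
    suffices htot : (∫⁻ x, F x) = ⊤ by
      rw [htot, ENNReal.top_rpow_of_pos (by positivity)]
    -- annuli
    set Ek : ℕ → Set (Fin n → ℝ) :=
      fun k => Cube n 0 ((1/2:ℝ)^k) \ Cube n 0 ((1/2:ℝ)^(k+1)) with hEkdef
    have hEm : ∀ k, MeasurableSet (Ek k) :=
      fun k => (measurableSet_cube _ _ _).diff (measurableSet_cube _ _ _)
    have hQmono : ∀ i j : ℕ, i ≤ j → Cube n 0 ((1/2:ℝ)^j) ⊆ Cube n 0 ((1/2:ℝ)^i) :=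
      fun i j hij => cube_subset_cube
        (pow_le_pow_of_le_one (by norm_num) (by norm_num) hij)
    have hEd : Pairwise (Function.onFun Disjoint Ek) := by
      have key : ∀ i j : ℕ, i < j → Disjoint (Ek i) (Ek j) := by
        intro i j hij
        refine Disjoint.mono_right ?_ (disjoint_sdiff_left (s := Cube n 0 ((1/2:ℝ)^(i+1)))
          (t := Cube n 0 ((1/2:ℝ)^i)))
        exact diff_subset.trans (hQmono (i+1) j hij)
      intro i j hij
      rcases hij.lt_or_gt with h | h
      · exact key _ _ h
      · exact (key _ _ h).symm
    -- the uniform constant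
    set κ : ℝ≥0∞ := ENNReal.ofReal (Real.sqrt n ^ (-β)) *
      (ENNReal.ofReal (1/2) / c' ^ (1/p)) ^ q with hκdef
    have hsqn : (0:ℝ) < Real.sqrt n := Real.sqrt_pos.2 hn0
    have hκ0 : κ ≠ 0 := by
      apply mul_ne_zero
      · simp only [ne_eq, ENNReal.ofReal_eq_zero, not_le]
        exact Real.rpow_pos_of_pos hsqn _
      · apply (ENNReal.rpow_pos ?_ ?_).ne'
        · apply ENNReal.div_pos (by norm_num)
          exact ENNReal.rpow_ne_top_of_nonneg (by positivity) hc't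
        · exact (ENNReal.div_lt_top ENNReal.ofReal_ne_top
            (ENNReal.rpow_pos (lt_of_le_of_ne zero_le (Ne.symm hc'0)) hc't).ne').ne
    -- per-annulus lower bound
    have hann : ∀ k : ℕ, κ ≤ ∫⁻ x in Ek k, F x := by
      intro k
      set r : ℝ := (1/2:ℝ)^k with hrdef
      have hr : 0 < r := by positivity
      have hr1 : r ≤ 1 := pow_le_one₀ (by norm_num) (by norm_num)
      set a : ℝ≥0∞ := ENNReal.ofReal r with hadef
      have ha0 : a ≠ 0 := by
        simp only [hadef, ne_eq, ENNReal.ofReal_eq_zero, not_le]; exact hr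
      have hat : a ≠ ⊤ := ENNReal.ofReal_ne_top
      have ha1 : a ≤ 1 := by
        rw [hadef]; exact ENNReal.ofReal_le_one.2 hr1
      -- bound on ∫ W over the annulus
      have hWle : ∫⁻ x in Ek k, W x ≤ c' * a ^ ((n:ℝ) - lam) := by
        refine le_trans (lintegral_mono_set diff_subset) ?_
        exact weight_cube_bound n lam h1 h2.le hnne b C hCtop hA hch r hr
      set d : ℝ≥0∞ := (c' * a ^ ((n:ℝ) - lam)) ^ (1/p) with hddef
      have hbase0 : c' * a ^ ((n:ℝ) - lam) ≠ 0 := by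
        apply mul_ne_zero hc'0
        exact (ENNReal.rpow_pos (lt_of_le_of_ne zero_le (Ne.symm ha0)) hat).ne'
      have hbaset : c' * a ^ ((n:ℝ) - lam) ≠ ⊤ :=
        ENNReal.mul_ne_top hc't (ENNReal.rpow_ne_top_of_nonneg (by linarith) hat)
      have hd0 : d ≠ 0 := (ENNReal.rpow_pos (lt_of_le_of_ne zero_le (Ne.symm hbase0))
        hbaset).ne'
      have hdt : d ≠ ⊤ := ENNReal.rpow_ne_top_of_nonneg (by positivity) hbaset
      have hdle : (∫⁻ x in Ek k, W x) ^ (1/p) ≤ d :=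
        ENNReal.rpow_le_rpow hWle (by positivity)
      have hJ : (volume (Ek k) / d) ^ q ≤ ∫⁻ x in Ek k, W x ^ (-(q - 1)) :=
        holder_lower hbm hb0 (hEm k) hpq hdle hd0 hdt
      -- volume of the annulus
      have hvol : ENNReal.ofReal (1/2) * a ^ ((n:ℝ)) ≤ volume (Ek k) := by
        have hsub : Cube n 0 ((1/2:ℝ)^(k+1)) ⊆ Cube n 0 r :=
          hQmono k (k+1) (Nat.le_succ k)
        have hveq : volume (Ek k) =
            ENNReal.ofReal (r^n) - ENNReal.ofReal (((1/2:ℝ)^(k+1))^n) := by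
          rw [hEkdef]
          simp only []
          rw [measure_diff hsub ((measurableSet_cube _ _ _).nullMeasurableSet)
            (by rw [volume_cube]; exact ENNReal.pow_ne_top ENNReal.ofReal_ne_top),
            volume_cube, volume_cube, ← ENNReal.ofReal_pow (by positivity),
            ← ENNReal.ofReal_pow (by positivity)]
        rw [hveq, ← ENNReal.ofReal_sub _ (by positivity)]
        have hreal : (1/2) * r^n ≤ r^n - ((1/2:ℝ)^(k+1))^n := by
          have h12 : ((1/2:ℝ))^(k+1) = r * (1/2) := by rw [pow_succ]
          have hpow : ((1/2:ℝ))^n ≤ 1/2 := by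
            calc ((1/2:ℝ))^n ≤ (1/2)^1 :=
                pow_le_pow_of_le_one (by norm_num) (by norm_num)
                  (Nat.one_le_iff_ne_zero.2 hnne)
              _ = 1/2 := pow_one _
          have h0 : (0:ℝ) < r^n := pow_pos hr n
          rw [h12, mul_pow]
          nlinarith [pow_pos (show (0:ℝ) < 1/2 by norm_num) n]
        refine le_trans (le_of_eq ?_) (ENNReal.ofReal_le_ofReal hreal)
        rw [hadef, ENNReal.rpow_natCast, ← ENNReal.ofReal_pow hr.le,
          ← ENNReal.ofReal_mul (by norm_num)]
      -- pointwise bound on the upper level set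
      have hsub1 : Ek k ⊆ Cube n 0 1 := diff_subset.trans (cube_subset_cube hr1)
      have hgx : ∀ x ∈ Ek k \ {0},
          ENNReal.ofReal ((Real.sqrt n * r) ^ (-β)) * W x ^ (-(q-1)) ≤ F x := by
        rintro x ⟨hxE, hx0⟩
        have hxQ : x ∈ Cube n 0 r := hxE.1
        have hx1 : x ∈ Cube n 0 1 := hsub1 hxE
        have hne : x ≠ 0 := by simpa using hx0
        have hEpos : 0 < euclidNorm n x := euclidNorm_pos hne
        have hEle : euclidNorm n x ≤ Real.sqrt n * r := euclidNorm_le_of_mem_cube hr.le hxQ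
        rw [hFdef]
        refine mul_le_mul_left ?_ _
        have hgval : g x = euclidNorm n x ^ (α * (-(1:ℝ)/p)) := by
          rw [hgdef, Set.indicator_of_mem hx1, ← Real.rpow_mul (euclidNorm_nonneg n x)]
        rw [hgval, abs_of_nonneg (Real.rpow_nonneg (euclidNorm_nonneg n x) _),
          ENNReal.ofReal_rpow_of_pos (Real.rpow_pos_of_pos hEpos _),
          ← Real.rpow_mul (euclidNorm_nonneg n x)]
        have hexp : α * (-(1:ℝ)/p) * q = -β := by
          rw [hqdef, hβdef]; field_simp
        rw [hexp]
        exact ENNReal.ofReal_le_ofReal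
          (Real.rpow_le_rpow_of_nonpos hEpos hEle (by linarith))
      -- integral lower bound
      have haeE : (Ek k \ {0} : Set (Fin n → ℝ)) =ᵐ[volume] Ek k :=
        diff_ae_eq_self.2 (measure_mono_null inter_subset_right (volume_singleton_zero hnne))
      have hI : ENNReal.ofReal ((Real.sqrt n * r) ^ (-β)) * (volume (Ek k) / d) ^ q ≤
          ∫⁻ x in Ek k, F x := by
        calc ENNReal.ofReal ((Real.sqrt n * r) ^ (-β)) * (volume (Ek k) / d) ^ q
            ≤ ENNReal.ofReal ((Real.sqrt n * r) ^ (-β)) *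
              ∫⁻ x in Ek k, W x ^ (-(q-1)) := mul_le_mul_right hJ _
          _ = ENNReal.ofReal ((Real.sqrt n * r) ^ (-β)) *
              ∫⁻ x in Ek k \ {0}, W x ^ (-(q-1)) := by rw [setLIntegral_congr haeE]
          _ = ∫⁻ x in Ek k \ {0},
              ENNReal.ofReal ((Real.sqrt n * r) ^ (-β)) * W x ^ (-(q-1)) :=
              (lintegral_const_mul _ (hbm.ennreal_ofReal.pow_const _)).symm
          _ ≤ ∫⁻ x in Ek k \ {0}, F x :=
              setLIntegral_mono' ((hEm k).diff (measurableSet_singleton 0)) hgx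
          _ ≤ ∫⁻ x in Ek k, F x := lintegral_mono_set diff_subset
      -- algebra: the lower bound is at least κ
      have hcp0 : c' ^ (1/p) ≠ 0 :=
        (ENNReal.rpow_pos (lt_of_le_of_ne zero_le (Ne.symm hc'0)) hc't).ne'
      have hcpt : c' ^ (1/p) ≠ ⊤ := ENNReal.rpow_ne_top_of_nonneg (by positivity) hc't
      set m : ℝ := ((n:ℝ) - lam) * (1/p) with hmdef
      have hdeq : d = c' ^ (1/p) * a ^ m := by
        rw [hddef, ENNReal.mul_rpow_of_nonneg _ _ (by positivity), ← ENNReal.rpow_mul]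
      have hsplit : (ENNReal.ofReal (1/2) * a^((n:ℝ))) / d =
          (ENNReal.ofReal (1/2) / c' ^ (1/p)) * a ^ ((n:ℝ) - m) := by
        have e1 : ENNReal.ofReal (1/2) / c'^(1/p) = ENNReal.ofReal (1/2) * (c'^(1/p))⁻¹ :=
          div_eq_mul_inv _ _
        have e2 : a^((n:ℝ)) / a^m = a^((n:ℝ)) * (a^m)⁻¹ := div_eq_mul_inv _ _
        rw [hdeq, ENNReal.rpow_sub _ _ ha0 hat, e1, e2, div_eq_mul_inv,
          ENNReal.mul_inv (Or.inl hcp0) (Or.inl hcpt)]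
        ring
      set δ : ℝ := -β + ((n:ℝ) - m) * q with hδdef
      have hδ : δ ≤ 0 := by
        have heq : δ = (lam + p * n - n - α)/(p-1) := by
          rw [hδdef, hmdef, hqdef, hβdef]; field_simp; ring
        rw [heq]
        exact div_nonpos_of_nonpos_of_nonneg (by linarith) (by linarith)
      have hX : ENNReal.ofReal ((Real.sqrt n * r) ^ (-β)) *
          ((ENNReal.ofReal (1/2) * a^((n:ℝ))) / d) ^ q = κ * a ^ δ := by
        rw [hsplit, ENNReal.mul_rpow_of_nonneg _ _ hq0.le, ← ENNReal.rpow_mul,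
          Real.mul_rpow hsqn.le hr.le,
          ENNReal.ofReal_mul (Real.rpow_nonneg hsqn.le _),
          ← ENNReal.ofReal_rpow_of_pos hr, hκdef, hδdef,
          ENNReal.rpow_add _ _ ha0 hat]
        ring
      have hfin : κ ≤ ENNReal.ofReal ((Real.sqrt n * r) ^ (-β)) *
          ((ENNReal.ofReal (1/2) * a^((n:ℝ))) / d) ^ q := by
        rw [hX]
        have h1a : (1:ℝ≥0∞) ≤ a ^ δ := by
          have := ennreal_rpow_anti (x := a) (y := 1) ha1 hδ
          simpa using this
        calc κ = κ * 1 := (mul_one κ).symm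
          _ ≤ κ * a ^ δ := mul_le_mul_right h1a κ
      refine hfin.trans (le_trans ?_ hI)
      exact mul_le_mul_right (ENNReal.rpow_le_rpow (ENNReal.div_le_div_right hvol d) hq0.le) _
    -- conclude
    have hsum : (⊤:ℝ≥0∞) ≤ ∑' k, ∫⁻ x in Ek k, F x := by
      rw [← ENNReal.tsum_const_eq_top_of_ne_zero (α := ℕ) hκ0]
      exact ENNReal.tsum_le_tsum hann
    have hle : ∑' k, ∫⁻ x in Ek k, F x ≤ ∫⁻ x, F x := by
      rw [← lintegral_iUnion hEm hEd]
      exact setLIntegral_le_lintegral _ _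
    exact top_le_iff.1 (hsum.trans hle)
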